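/- Assume G has the 4-cycle chord property and the 5-cycle chord property. If some two non-consecutive vertices of the 10-cycle O are adjacent in G, then all ten vertices of O are pairwise adjacent in G (O is a clique). -/

import Mathlib

set_option maxHeartbeats 1000000 in
theorem abs0 (R : Fin 10 → Fin 10 → Prop)
    (hsymm : ∀ i j, R i j → R j i)
    (hrot : ∀ i j, R i j → R (i+2) (j+2))
    (hrefl : ∀ i j, R i j → R (1-i) (1-j))
    (hedge : ∀ i, R i (i+1))
    (hc4 : ∀ i j k l : Fin 10, i ≠ k → j ≠ l → R i j → R j k → R k l → R l i →
      R i k ∨ R j l)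
    (hc5 : ∀ i1 i2 i3 i4 i5 : Fin 10,
      ([i1, i2, i3, i4, i5] : List (Fin 10)).Pairwise (· ≠ ·) →
      R i1 i2 → R i2 i3 → R i3 i4 → R i4 i5 → R i5 i1 →
      R i1 i3 ∨ R i2 i4 ∨ R i3 i5 ∨ R i4 i1 ∨ R i5 i2)
    (h0 : R 0 2 ∨ R 0 3 ∨ R 0 4 ∨ R 0 5) :
    ∀ i j : Fin 10, i ≠ j → R i j := by
  have mk3 : R 0 3 → R 1 4 → ∀ i, R i (i+3) := by
    intro hA hB
    have a1 := hrot _ _ hA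
    have a2 := hrot _ _ a1
    have a3 := hrot _ _ a2
    have a4 := hrot _ _ a3
    have b1 := hrot _ _ hB
    have b2 := hrot _ _ b1
    have b3 := hrot _ _ b2
    have b4 := hrot _ _ b3
    intro i; fin_cases i
    exacts [hA, hB, a1, b1, a2, b2, a3, b3, a4, b4]
  have mk5 : R 0 5 → ∀ i, R i (i+5) := by
    intro hA
    have a1 := hrot _ _ hA
    have a2 := hrot _ _ a1
    have a3 := hrot _ _ a2
    have a4 := hrot _ _ a3
    intro i; fin_cases i
    exacts [hA, hsymm _ _ a3, a1, hsymm _ _ a4, a2, hsymm _ _ hA, a3,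
      hsymm _ _ a1, a4, hsymm _ _ a2]
  have key2 : R 0 2 → ∀ i j, i ≠ j → R i j := by
    intro h02
    have d2 : ∀ i, R i (i+2) := by
      have e1 := hrot _ _ h02
      have e2 := hrot _ _ e1
      have e3 := hrot _ _ e2
      have e4 := hrot _ _ e3
      have f0 := hrefl _ _ h02
      have f1 := hrot _ _ f0
      have f2 := hrot _ _ f1
      have f3 := hrot _ _ f2
      have f4 := hrot _ _ f3
      intro i; fin_cases i
      exacts [h02, hsymm _ _ f1, e1, hsymm _ _ f2, e2, hsymm _ _ f3, e3,
        hsymm _ _ f4, e4, hsymm _ _ f0]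
    have d4 : ∀ i, R i (i+4) := by
      have c := hc5 0 2 4 6 8 (by decide) (d2 0) (d2 2) (d2 4) (d2 6) (d2 8)
      have h04 : R 0 4 := by
        rcases c with h|h|h|h|h
        · exact h
        · exact hrot _ _ (hrot _ _ (hrot _ _ (hrot _ _ h)))
        · exact hrot _ _ (hrot _ _ (hrot _ _ h))
        · exact hrot _ _ (hrot _ _ h)
        · exact hrot _ _ h
      have e1 := hrot _ _ h04
      have e2 := hrot _ _ e1
      have e3 := hrot _ _ e2
      have e4 := hrot _ _ e3
      have f0 := hrefl _ _ h04
      have f1 := hrot _ _ f0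
      have f2 := hrot _ _ f1
      have f3 := hrot _ _ f2
      have f4 := hrot _ _ f3
      intro i; fin_cases i
      exacts [h04, hsymm _ _ f2, e1, hsymm _ _ f3, e2, hsymm _ _ f4, e3,
        hsymm _ _ f0, e4, hsymm _ _ f1]
    have finish : (∀ i, R i (i+3)) → (∀ i, R i (i+5)) → ∀ i j, i ≠ j → R i j := by
      intro d3 d5 i j hij
      fin_cases i <;> fin_cases j <;>
        first
          | exact absurd rfl hij
          | exact hedge _ | exact hsymm _ _ (hedge _)
          | exact d2 _ | exact hsymm _ _ (d2 _)
          | exact d3 _ | exact hsymm _ _ (d3 _)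
          | exact d4 _ | exact hsymm _ _ (d4 _)
          | exact d5 _ | exact hsymm _ _ (d5 _)
    have c2 := hc4 0 1 3 4 (by decide) (by decide) (hedge 0) (d2 1) (hedge 3)
      (hsymm _ _ (d4 0))
    rcases c2 with h03 | h14
    · have a1 := hrot _ _ h03
      have c3 := hc4 0 2 5 9 (by decide) (by decide) (d2 0) a1 (d4 5) (hedge 9)
      rcases c3 with h05 | h29
      · have d5 := mk5 h05
        have c4 := hc4 1 3 4 6 (by decide) (by decide) (d2 1) (hedge 3) (d2 4) (d5 6)
        rcases c4 with h14 | h36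
        · exact finish (mk3 h03 h14) d5
        · exact finish (mk3 h03
            (hrot _ _ (hrot _ _ (hrot _ _ (hrot _ _ h36))))) d5
      · have h14 : R 1 4 := hrot _ _ (hsymm _ _ h29)
        have d3 := mk3 h03 h14
        have c5 := hc4 0 2 5 7 (by decide) (by decide) (d2 0) (d3 2) (d2 5) (d3 7)
        rcases c5 with h05 | h27
        · exact finish d3 (mk5 h05)
        · exact finish d3 (mk5 (hrot _ _ (hrot _ _ (hrot _ _ (hrot _ _ h27)))))
    · have b1 := hrot _ _ h14
      have c3 := hc4 1 3 6 0 (by decide) (by decide) (d2 1) b1 (d4 6) (hedge 0)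
      rcases c3 with h16 | h30
      · have d5 := mk5 (hrot _ _ (hrot _ _ (hsymm _ _ h16)))
        have c4 := hc4 2 4 5 7 (by decide) (by decide) (d2 2) (hedge 4) (d2 5) (d5 7)
        rcases c4 with h25 | h47
        · exact finish (mk3 (hrot _ _ (hrot _ _ (hrot _ _ (hrot _ _ h25)))) h14) d5
        · exact finish (mk3 (hrot _ _ (hrot _ _ (hrot _ _ h47))) h14) d5
      · have h03 : R 0 3 := hsymm _ _ h30
        have d3 := mk3 h03 h14
        have c5 := hc4 1 3 6 8 (by decide) (by decide) (d2 1) (d3 3) (d2 6) (d3 8)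
        rcases c5 with h16 | h38
        · exact finish d3 (mk5 (hrot _ _ (hrot _ _ (hsymm _ _ h16))))
        · exact finish d3 (mk5 (hrot _ _ (hsymm _ _ h38)))
  have key4 : R 0 4 → ∀ i j, i ≠ j → R i j := by
    intro h
    have e1 := hrot _ _ h
    have e2 := hrot _ _ e1
    have e3 := hrot _ _ e2
    have e4 := hrot _ _ e3
    have c := hc5 0 4 8 2 6 (by decide) h e2 e4 e1 e3
    rcases c with h'|h'|h'|h'|h'
    · exact key2 (hrot _ _ (hsymm _ _ h'))
    · exact key2 (hrot _ _ (hrot _ _ (hrot _ _ (hrot _ _ (hsymm _ _ h')))))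
    · exact key2 (hrot _ _ (hrot _ _ (hsymm _ _ h')))
    · exact key2 (hsymm _ _ h')
    · exact key2 (hrot _ _ (hrot _ _ (hrot _ _ (hsymm _ _ h'))))
  rcases h0 with h|h|h|h
  · exact key2 h
  · rcases hc4 0 1 2 3 (by decide) (by decide) (hedge 0) (hedge 1) (hedge 2)
      (hsymm _ _ h) with h02 | h13
    · exact key2 h02
    · exact key2 (hrot _ _ (hsymm _ _ (hrefl _ _ h13)))
  · exact key4 h
  · have g3 := hrot _ _ (hrot _ _ (hrot _ _ h))
    rcases hc4 0 5 6 1 (by decide) (by decide) h (hedge 5) g3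
      (hsymm _ _ (hedge 0)) with h06 | h51
    · exact key4 (hrot _ _ (hrot _ _ (hsymm _ _ h06)))
    · exact key4 (hrot _ _ (hrot _ _ (hsymm _ _ (hrefl _ _ (hsymm _ _ h51)))))

open Fin.CommRing Fin.NatCast in
set_option maxHeartbeats 1000000 in
theorem absE (R : Fin 10 → Fin 10 → Prop)
    (hsymm : ∀ i j, R i j → R j i)
    (hrot : ∀ i j, R i j → R (i+2) (j+2))
    (hrefl : ∀ i j, R i j → R (1-i) (1-j))
    (hedge : ∀ i, R i (i+1))
    (hc4 : ∀ i j k l : Fin 10, i ≠ k → j ≠ l → R i j → R j k → R k l → R l i →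
      R i k ∨ R j l)
    (hc5 : ∀ i1 i2 i3 i4 i5 : Fin 10,
      ([i1, i2, i3, i4, i5] : List (Fin 10)).Pairwise (· ≠ ·) →
      R i1 i2 → R i2 i3 → R i3 i4 → R i4 i5 → R i5 i1 →
      R i1 i3 ∨ R i2 i4 ∨ R i3 i5 ∨ R i4 i1 ∨ R i5 i2)
    (h0 : ∃ x : Fin 10, R x (x+2) ∨ R x (x+3) ∨ R x (x+4) ∨ R x (x+5)) :
    ∀ i j : Fin 10, i ≠ j → R i j := by
  obtain ⟨x, hx⟩ := h0
  have rotk : ∀ (k : ℕ) (i j : Fin 10), R i j → R (i + 2*(k:Fin 10)) (j + 2*(k:Fin 10)) := by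
    intro k
    induction k with
    | zero => intro i j h; simpa using h
    | succ n ih =>
      intro i j h
      have h2 := ih _ _ (hrot _ _ h)
      have e : ∀ m : Fin 10, m + 2 + 2*(n:Fin 10) = m + 2*(((n+1 : ℕ)):Fin 10) := by
        intro m; push_cast; ring
      rw [e i, e j] at h2; exact h2
  have main := abs0 (fun i j => R (x + i) (x + j))
    (fun i j h => hsymm _ _ h)
    (fun i j h => by
      have h2 := hrot _ _ h
      rwa [show x+i+2 = x+(i+2) by ring, show x+j+2 = x+(j+2) by ring] at h2)
    (fun i j h => by
      have h1 := hrefl _ _ h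
      have h2 := rotk x.val _ _ h1
      rw [Fin.cast_val_eq_self] at h2
      rwa [show 1-(x+i)+2*x = x+(1-i) by ring, show 1-(x+j)+2*x = x+(1-j) by ring] at h2)
    (fun i => by have h2 := hedge (x+i); rwa [show x+i+1 = x+(i+1) by ring] at h2)
    (fun i j k l hik hjl h1 h2 h3 h4 =>
      hc4 _ _ _ _ (fun hh => hik (add_left_cancel hh))
        (fun hh => hjl (add_left_cancel hh)) h1 h2 h3 h4)
    (fun i1 i2 i3 i4 i5 hpw h1 h2 h3 h4 h5 => by
      refine hc5 _ _ _ _ _ ?_ h1 h2 h3 h4 h5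
      have h6 : ([i1,i2,i3,i4,i5] : List (Fin 10)).Pairwise
          (fun p q => x+p ≠ x+q) :=
        hpw.imp (fun hpq hh => hpq (add_left_cancel hh))
      have h7 := (List.pairwise_map (f := fun t => x + t)).mpr h6
      simpa using h7)
    (by
      rcases hx with h|h|h|h
      · exact Or.inl (by simpa using h)
      · exact Or.inr (Or.inl (by simpa using h))
      · exact Or.inr (Or.inr (Or.inl (by simpa using h)))
      · exact Or.inr (Or.inr (Or.inr (by simpa using h))))
  intro i j hij
  have h2 := main (i - x) (j - x) (fun hh => hij (by
    have : x + (i - x) = x + (j - x) := by rw [hh]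
    rwa [show x + (i-x) = i by ring, show x + (j-x) = j by ring] at this))
  beta_reduce at h2
  rwa [show x + (i-x) = i by ring, show x + (j-x) = j by ring] at h2

set_option maxHeartbeats 1000000 in
theorem stmt7 {V : Type*} (G : SimpleGraph V)
    (hchord4 : ∀ w1 w2 w3 w4 : V, G.Adj w1 w2 → G.Adj w2 w3 → G.Adj w3 w4 →
      G.Adj w4 w1 → w1 ≠ w3 → w2 ≠ w4 → G.Adj w1 w3 ∨ G.Adj w2 w4)
    (hchord5 : ∀ w1 w2 w3 w4 w5 : V,
      ([w1, w2, w3, w4, w5] : List V).Pairwise (· ≠ ·) →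
      G.Adj w1 w2 → G.Adj w2 w3 → G.Adj w3 w4 → G.Adj w4 w5 → G.Adj w5 w1 →
      G.Adj w1 w3 ∨ G.Adj w2 w4 ∨ G.Adj w3 w5 ∨ G.Adj w4 w1 ∨ G.Adj w5 w2)
    (a b : G ≃g G)
    (haa : ∀ z, a (a z) = z) (hbb : ∀ z, b (b z) = z)
    (hab5 : ∀ z : V, a (b (a (b (a (b (a (b (a (b (z)))))))))) = z)
    (v : V) (hva : G.Adj v (a v)) (hvb : G.Adj v (b v))
    (hdist : ([v, a v, a (b v), a (b (a v)), a (b (a (b v))), a (b (a (b (a v)))), a (b (a (b (a (b v))))), a (b (a (b (a (b (a v)))))), a (b (a (b (a (b (a (b v))))))), a (b (a (b (a (b (a (b (a v))))))))] : List V).Pairwise (· ≠ ·))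
    (o : Fin 10 → V) (ho : o = ![v, a v, a (b v), a (b (a v)), a (b (a (b v))), a (b (a (b (a v)))), a (b (a (b (a (b v))))), a (b (a (b (a (b (a v)))))), a (b (a (b (a (b (a (b v))))))), a (b (a (b (a (b (a (b (a v))))))))])
    (hdiag : ∃ i j : Fin 10, i ≠ j ∧ j ≠ i + 1 ∧ i ≠ j + 1 ∧ G.Adj (o i) (o j)) :
    ∀ i j : Fin 10, i ≠ j → G.Adj (o i) (o j) := by
  have h1 : ∀ z : V, b (a (b (a (b (a (b (a (b z)))))))) = a z := by
    intro z; have := congrArg a (hab5 z); rwa [haa] at this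
  have h2 : ∀ z : V, a (b (a (b (a (b (a (b z))))))) = b (a z) := by
    intro z; have := congrArg b (h1 z); rwa [hbb] at this
  have h3 : ∀ z : V, b (a (b (a (b (a (b z)))))) = a (b (a z)) := by
    intro z; have := congrArg a (h2 z); rwa [haa] at this
  have h4 : ∀ z : V, a (b (a (b (a (b z))))) = b (a (b (a z)))  := by
    intro z; have := congrArg b (h3 z); rwa [hbb] at this
  have h5 : ∀ z : V, b (a (b (a (b z)))) = a (b (a (b (a z)))) := by
    intro z; have := congrArg a (h4 z); rwa [haa] at this
  have o0 : o 0 = v := by rw [ho]; rfl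
  have o1 : o 1 = a v := by rw [ho]; rfl
  have o2 : o 2 = a (b v) := by rw [ho]; rfl
  have o3 : o 3 = a (b (a v)) := by rw [ho]; rfl
  have o4 : o 4 = a (b (a (b v))) := by rw [ho]; rfl
  have o5 : o 5 = a (b (a (b (a v)))) := by rw [ho]; rfl
  have o6 : o 6 = a (b (a (b (a (b v))))) := by rw [ho]; rfl
  have o7 : o 7 = a (b (a (b (a (b (a v)))))) := by rw [ho]; rfl
  have o8 : o 8 = a (b (a (b (a (b (a (b v))))))) := by rw [ho]; rfl
  have o9 : o 9 = a (b (a (b (a (b (a (b (a v)))))))) := by rw [ho]; rfl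
  have hao : ∀ i : Fin 10, a (o i) = o (1 - i) := by
    intro i; fin_cases i
    · show a (o 0) = o 1
      rw [o0, o1]; try simp [haa, hbb, h1, h2, h3, h4, h5]
    · show a (o 1) = o 0
      rw [o1, o0]; try simp [haa, hbb, h1, h2, h3, h4, h5]
    · show a (o 2) = o 9
      rw [o2, o9]; try simp [haa, hbb, h1, h2, h3, h4, h5]
    · show a (o 3) = o 8
      rw [o3, o8]; try simp [haa, hbb, h1, h2, h3, h4, h5]
    · show a (o 4) = o 7
      rw [o4, o7]; try simp [haa, hbb, h1, h2, h3, h4, h5]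
    · show a (o 5) = o 6
      rw [o5, o6]; try simp [haa, hbb, h1, h2, h3, h4, h5]
    · show a (o 6) = o 5
      rw [o6, o5]; try simp [haa, hbb, h1, h2, h3, h4, h5]
    · show a (o 7) = o 4
      rw [o7, o4]; try simp [haa, hbb, h1, h2, h3, h4, h5]
    · show a (o 8) = o 3
      rw [o8, o3]; try simp [haa, hbb, h1, h2, h3, h4, h5]
    · show a (o 9) = o 2
      rw [o9, o2]; try simp [haa, hbb, h1, h2, h3, h4, h5]
  have hbo : ∀ i : Fin 10, b (o i) = o (-1 - i) := by
    intro i; fin_cases i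
    · show b (o 0) = o 9
      rw [o0, o9]; try simp [haa, hbb, h1, h2, h3, h4, h5]
    · show b (o 1) = o 8
      rw [o1, o8]; try simp [haa, hbb, h1, h2, h3, h4, h5]
    · show b (o 2) = o 7
      rw [o2, o7]; try simp [haa, hbb, h1, h2, h3, h4, h5]
    · show b (o 3) = o 6
      rw [o3, o6]; try simp [haa, hbb, h1, h2, h3, h4, h5]
    · show b (o 4) = o 5
      rw [o4, o5]; try simp [haa, hbb, h1, h2, h3, h4, h5]
    · show b (o 5) = o 4
      rw [o5, o4]; try simp [haa, hbb, h1, h2, h3, h4, h5]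
    · show b (o 6) = o 3
      rw [o6, o3]; try simp [haa, hbb, h1, h2, h3, h4, h5]
    · show b (o 7) = o 2
      rw [o7, o2]; try simp [haa, hbb, h1, h2, h3, h4, h5]
    · show b (o 8) = o 1
      rw [o8, o1]; try simp [haa, hbb, h1, h2, h3, h4, h5]
    · show b (o 9) = o 0
      rw [o9, o0]; try simp [haa, hbb, h1, h2, h3, h4, h5]
  have refla : ∀ i j : Fin 10, G.Adj (o i) (o j) → G.Adj (o (1-i)) (o (1-j)) := by
    intro i j h
    have h' := a.map_adj_iff.mpr h
    rwa [hao i, hao j] at h'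
  have reflb : ∀ i j : Fin 10, G.Adj (o i) (o j) → G.Adj (o (-1-i)) (o (-1-j)) := by
    intro i j h
    have h' := b.map_adj_iff.mpr h
    rwa [hbo i, hbo j] at h'
  have rot : ∀ i j : Fin 10, G.Adj (o i) (o j) → G.Adj (o (i+2)) (o (j+2)) := by
    intro i j h
    have h' := refla _ _ (reflb _ _ h)
    rwa [show (1 - (-1 - i) : Fin 10) = i + 2 by open Fin.CommRing in ring,
      show (1 - (-1 - j) : Fin 10) = j + 2 by open Fin.CommRing in ring] at h'
  have E01 : G.Adj (o 0) (o 1) := by rw [o0, o1]; exact hva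
  have hbv : b v = o 9 := by rw [o9]; simp [haa, hbb, h1, h2, h3, h4, h5]
  have E09 : G.Adj (o 0) (o 9) := by rw [o0, ← hbv]; exact hvb
  have E23 := rot _ _ E01
  have E45 := rot _ _ E23
  have E67 := rot _ _ E45
  have E89 := rot _ _ E67
  have E21 := rot _ _ E09
  have E43 := rot _ _ E21
  have E65 := rot _ _ E43
  have E87 := rot _ _ E65
  have hedge : ∀ i : Fin 10, G.Adj (o i) (o (i+1)) := by
    intro i; fin_cases i
    exacts [E01, E21.symm, E23, E43.symm, E45, E65.symm, E67, E87.symm, E89, E09.symm]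
  have hdist' : ([o 0, o 1, o 2, o 3, o 4, o 5, o 6, o 7, o 8, o 9] : List V).Pairwise (· ≠ ·) := by
    rw [o0, o1, o2, o3, o4, o5, o6, o7, o8, o9]; exact hdist
  simp only [List.pairwise_cons, List.mem_cons, List.mem_singleton, List.not_mem_nil,
    or_false, forall_eq_or_imp, forall_eq, List.Pairwise.nil, and_true, List.not_mem_nil,
    IsEmpty.forall_iff, implies_true, true_and] at hdist'
  obtain ⟨⟨n01, n02, n03, n04, n05, n06, n07, n08, n09⟩, ⟨n12, n13, n14, n15, n16, n17, n18, n19⟩, ⟨n23, n24, n25, n26, n27, n28, n29⟩, ⟨n34, n35, n36, n37, n38, n39⟩, ⟨n45, n46, n47, n48, n49⟩, ⟨n56, n57, n58, n59⟩, ⟨n67, n68, n69⟩, ⟨n78, n79⟩, n89⟩ := hdist'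
  have hne : ∀ i j : Fin 10, i ≠ j → o i ≠ o j := by
    intro i j hij; fin_cases i <;> fin_cases j
    · exact absurd rfl hij
    · exact n01
    · exact n02
    · exact n03
    · exact n04
    · exact n05
    · exact n06
    · exact n07
    · exact n08
    · exact n09
    · exact (n01).symm
    · exact absurd rfl hij
    · exact n12
    · exact n13
    · exact n14
    · exact n15
    · exact n16
    · exact n17
    · exact n18
    · exact n19
    · exact (n02).symm
    · exact (n12).symm
    · exact absurd rfl hij
    · exact n23
    · exact n24
    · exact n25
    · exact n26
    · exact n27
    · exact n28
    · exact n29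
    · exact (n03).symm
    · exact (n13).symm
    · exact (n23).symm
    · exact absurd rfl hij
    · exact n34
    · exact n35
    · exact n36
    · exact n37
    · exact n38
    · exact n39
    · exact (n04).symm
    · exact (n14).symm
    · exact (n24).symm
    · exact (n34).symm
    · exact absurd rfl hij
    · exact n45
    · exact n46
    · exact n47
    · exact n48
    · exact n49
    · exact (n05).symm
    · exact (n15).symm
    · exact (n25).symm
    · exact (n35).symm
    · exact (n45).symm
    · exact absurd rfl hij
    · exact n56
    · exact n57
    · exact n58
    · exact n59
    · exact (n06).symm
    · exact (n16).symm
    · exact (n26).symm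
    · exact (n36).symm
    · exact (n46).symm
    · exact (n56).symm
    · exact absurd rfl hij
    · exact n67
    · exact n68
    · exact n69
    · exact (n07).symm
    · exact (n17).symm
    · exact (n27).symm
    · exact (n37).symm
    · exact (n47).symm
    · exact (n57).symm
    · exact (n67).symm
    · exact absurd rfl hij
    · exact n78
    · exact n79
    · exact (n08).symm
    · exact (n18).symm
    · exact (n28).symm
    · exact (n38).symm
    · exact (n48).symm
    · exact (n58).symm
    · exact (n68).symm
    · exact (n78).symm
    · exact absurd rfl hij
    · exact n89
    · exact (n09).symm
    · exact (n19).symm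
    · exact (n29).symm
    · exact (n39).symm
    · exact (n49).symm
    · exact (n59).symm
    · exact (n69).symm
    · exact (n79).symm
    · exact (n89).symm
    · exact absurd rfl hij
  refine absE (fun i j => G.Adj (o i) (o j)) (fun i j h => h.symm) rot refla hedge
    (fun i j k l hik hjl u1 u2 u3 u4 =>
      hchord4 _ _ _ _ u1 u2 u3 u4 (hne i k hik) (hne j l hjl))
    (fun i1 i2 i3 i4 i5 hpw u1 u2 u3 u4 u5 => by
      refine hchord5 _ _ _ _ _ ?_ u1 u2 u3 u4 u5
      have h6 := hpw.imp (fun {p q} hpq => hne p q hpq)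
      have h7 := (List.pairwise_map (f := o)).mpr h6
      simpa using h7) ?_
  obtain ⟨i, j, hne1, hne2, hne3, hadj⟩ := hdiag
  have henum : ∀ d : Fin 10, d = 0 ∨ d = 1 ∨ d = 2 ∨ d = 3 ∨ d = 4 ∨ d = 5 ∨ d = 6 ∨
      d = 7 ∨ d = 8 ∨ d = 9 := by decide
  have hji : i + (j - i) = j := by open Fin.CommRing in ring
  have hij' : j + (i - j) = i := by open Fin.CommRing in ring
  rcases henum (j - i) with h|h|h|h|h|h|h|h|h|h
  · exact absurd (by rw [← hji, h, add_zero]) (Ne.symm hne1)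
  · exact absurd (by rw [← hji, h]) hne2
  · rw [← hji, h] at hadj; exact ⟨i, Or.inl hadj⟩
  · rw [← hji, h] at hadj; exact ⟨i, Or.inr (Or.inl hadj)⟩
  · rw [← hji, h] at hadj; exact ⟨i, Or.inr (Or.inr (Or.inl hadj))⟩
  · rw [← hji, h] at hadj; exact ⟨i, Or.inr (Or.inr (Or.inr hadj))⟩
  · have h' : i - j = 4 := by rw [show (i - j : Fin 10) = -(j-i) by open Fin.CommRing in ring, h]; rfl
    have hadj' := hadj.symm
    rw [← hij', h'] at hadj'
    exact ⟨j, Or.inr (Or.inr (Or.inl hadj'))⟩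
  · have h' : i - j = 3 := by rw [show (i - j : Fin 10) = -(j-i) by open Fin.CommRing in ring, h]; rfl
    have hadj' := hadj.symm
    rw [← hij', h'] at hadj'
    exact ⟨j, Or.inr (Or.inl hadj')⟩
  · have h' : i - j = 2 := by rw [show (i - j : Fin 10) = -(j-i) by open Fin.CommRing in ring, h]; rfl
    have hadj' := hadj.symm
    rw [← hij', h'] at hadj'
    exact ⟨j, Or.inl hadj'⟩
  · exact absurd (by rw [← hji, h, show (i + 9 + 1 : Fin 10) = i + 10 by open Fin.CommRing in ring,
      show (10 : Fin 10) = 0 from rfl, add_zero] :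
        i = j + 1) hne3
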